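/- Let P ⊆ ℝⁿ be a polytope, let v ∈ ℝⁿ, and let F, G be two nonempty faces of P. Then (F,G) ∈ F^φ if and only if v ∈ cone(−N_P(F) ∪ N_P(G)). -/

import Mathlib

open scoped BigOperators

noncomputable section

/-- Vectors in `ℝⁿ`. -/
abbrev Vec (n : ℕ) := Fin n → ℝ

/-- The standard scalar product on `ℝⁿ`. -/
def dot {n : ℕ} (x y : Vec n) : ℝ := ∑ i, x i * y i

/-- A polytope is the convex hull of a finite set of points. -/
def IsPolytope {n : ℕ} (P : Set (Vec n)) : Prop :=
  ∃ S : Finset (Vec n), P = convexHull ℝ (S : Set (Vec n))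

/-- A face of `P`: either `P` itself (take `c = 0`) or the subset of `P` where some linear
functional attains its maximum over `P`. -/
def IsFace {n : ℕ} (P F : Set (Vec n)) : Prop :=
  ∃ c : Vec n, F = {x ∈ P | ∀ y ∈ P, dot c y ≤ dot c x}

/-- Dimension of a subset of `ℝⁿ`: the rank of the direction of its affine span. -/
noncomputable def sdim {n : ℕ} (A : Set (Vec n)) : ℕ :=
  Module.finrank ℝ (affineSpan ℝ A).direction

/-- The normal cone of a face `F` of `P`. -/
def normalCone {n : ℕ} (P F : Set (Vec n)) : Set (Vec n) :=
  {c | F ⊆ {x ∈ P | ∀ y ∈ P, dot c y ≤ dot c x}}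

/-- `coneOf X`: nonnegative linear combinations of finitely many elements of `X`. -/
def coneOf {n : ℕ} (X : Set (Vec n)) : Set (Vec n) :=
  {v | ∃ (k : ℕ) (x : Fin k → Vec n) (l : Fin k → ℝ),
      (∀ i, x i ∈ X) ∧ (∀ i, 0 ≤ l i) ∧ v = ∑ i, l i • x i}

/-- The reflection `ρ_z P = 2z - P` of `P` with respect to `z`. -/
def reflP {n : ℕ} (z : Vec n) (P : Set (Vec n)) : Set (Vec n) :=
  (fun x => (2 : ℝ) • z - x) '' P

/-- An edge is a 1-dimensional face. -/
def IsEdge {n : ℕ} (P E : Set (Vec n)) : Prop := IsFace P E ∧ sdim E = 1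

/-- `(P, v)` is oriented if `v` is not perpendicular to any edge of `P`. -/
def Oriented {n : ℕ} (P : Set (Vec n)) (v : Vec n) : Prop :=
  ∀ E, IsEdge P E → ∀ d ∈ (affineSpan ℝ E).direction, d ≠ 0 → dot d v ≠ 0

/-- `(P, v)` is positively oriented if `(P ∩ ρ_z P, v)` is oriented for every `z ∈ P`. -/
def PosOriented {n : ℕ} (P : Set (Vec n)) (v : Vec n) : Prop :=
  ∀ z ∈ P, Oriented (P ∩ reflP z P) v

/-- `x` is the minimizer of `⟨-, v⟩` on `P`. -/
def IsBotOf {n : ℕ} (P : Set (Vec n)) (v x : Vec n) : Prop :=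
  x ∈ P ∧ ∀ y ∈ P, dot v x ≤ dot v y

/-- `x` is the maximizer of `⟨-, v⟩` on `P`. -/
def IsTopOf {n : ℕ} (P : Set (Vec n)) (v x : Vec n) : Prop :=
  x ∈ P ∧ ∀ y ∈ P, dot v y ≤ dot v x

/-- `(P, v)` is quasi-oriented if `⟨-, v⟩` has a unique minimizer and a unique maximizer on `P`. -/
def QuasiOriented {n : ℕ} (P : Set (Vec n)) (v : Vec n) : Prop :=
  (∃! x, IsBotOf P v x) ∧ (∃! x, IsTopOf P v x)

/-- `(P, v)` is quasi-positively oriented if `(P ∩ ρ_z P, v)` is quasi-oriented for all `z ∈ P`. -/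
def QuasiPosOriented {n : ℕ} (P : Set (Vec n)) (v : Vec n) : Prop :=
  ∀ z ∈ P, QuasiOriented (P ∩ reflP z P) v

/-- The polytope `P^φ = π^φ(P × P) ⊆ ℝ^{n+1}`, where `π^φ(x,y) = ((x+y)/2, ⟨x - y, v⟩)`. -/
def Pphi {n : ℕ} (P : Set (Vec n)) (v : Vec n) : Set (Vec (n + 1)) :=
  {w | ∃ x ∈ P, ∃ y ∈ P, w = Fin.snoc ((1 / 2 : ℝ) • (x + y)) (dot (x - y) v)}

/-- The pair of faces `(F, G)` belongs to `F^φ`: there are no `x ∈ F`, `y ∈ G`, `λ > 0` with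
`(π(x,y), φ(x,y) - λ) ∈ P^φ`. -/
def InFphi {n : ℕ} (P : Set (Vec n)) (v : Vec n) (F G : Set (Vec n)) : Prop :=
  ¬ ∃ x ∈ F, ∃ y ∈ G, ∃ lam : ℝ, 0 < lam ∧
      (Fin.snoc ((1 / 2 : ℝ) • (x + y)) (dot (x - y) v - lam) : Vec (n + 1)) ∈ Pphi P v

/-- The set `(A + B)/2`. -/
def avgSet {n : ℕ} (A B : Set (Vec n)) : Set (Vec n) :=
  {z | ∃ x ∈ A, ∃ y ∈ B, z = (1 / 2 : ℝ) • (x + y)}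

/-- The coherent subdivision `π(F^φ)` is tight. -/
def TightSub {n : ℕ} (P : Set (Vec n)) (v : Vec n) : Prop :=
  ∀ F G : Set (Vec n), IsFace P F → IsFace P G → F.Nonempty → G.Nonempty →
    InFphi P v F G → sdim F + sdim G = sdim (avgSet F G)

/-- `d` is a direction of an edge of `P ∩ ρ_z P` for some `z ∈ P`; the hyperplanes of the
fundamental hyperplane arrangement `H_P` are the orthogonal complements of such directions. -/
def EdgeDir {n : ℕ} (P : Set (Vec n)) (d : Vec n) : Prop :=
  d ≠ 0 ∧ ∃ z ∈ P, ∃ E, IsEdge (P ∩ reflP z P) E ∧ d ∈ (affineSpan ℝ E).direction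

/-- The cone `cone(-N_P(F) ∪ N_P(G))`. -/
def diagCone {n : ℕ} (P F G : Set (Vec n)) : Set (Vec n) :=
  coneOf ((Neg.neg '' normalCone P F) ∪ normalCone P G)


namespace StmtAux

lemma dot_comm {n} (x y : Vec n) : dot x y = dot y x :=
  Finset.sum_congr rfl fun i _ => mul_comm _ _

def dotL {n : ℕ} (y : Vec n) : Vec n →ₗ[ℝ] ℝ where
  toFun x := dot x y
  map_add' x z := by simp [dot, add_mul, Finset.sum_add_distrib]
  map_smul' r x := by simp [dot, Finset.mul_sum, mul_assoc]

lemma dot_sub_left {n} (x z y : Vec n) : dot (x - z) y = dot x y - dot z y :=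
  map_sub (dotL y) x z

lemma dot_add_left {n} (x z y : Vec n) : dot (x + z) y = dot x y + dot z y :=
  map_add (dotL y) x z

lemma dot_neg_left {n} (x y : Vec n) : dot (-x) y = - dot x y :=
  map_neg (dotL y) x

lemma dot_smul_left {n} (r : ℝ) (x y : Vec n) : dot (r • x) y = r * dot x y :=
  map_smul (dotL y) r x

lemma dot_sum_left {n} {ι : Type*} (J : Finset ι) (f : ι → Vec n) (y : Vec n) :
    dot (∑ i ∈ J, f i) y = ∑ i ∈ J, dot (f i) y :=
  map_sum (dotL y) f J

lemma dot_add_right {n} (x y z : Vec n) : dot x (y + z) = dot x y + dot x z := by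
  rw [dot_comm, dot_add_left, dot_comm y x, dot_comm z x]

lemma dot_sub_right {n} (x y z : Vec n) : dot x (y - z) = dot x y - dot x z := by
  rw [dot_comm, dot_sub_left, dot_comm y x, dot_comm z x]

lemma dot_smul_right {n} (r : ℝ) (x y : Vec n) : dot x (r • y) = r * dot x y := by
  rw [dot_comm, dot_smul_left, dot_comm y x]

lemma dot_sum_right {n} {ι : Type*} (J : Finset ι) (f : ι → Vec n) (y : Vec n) :
    dot y (∑ i ∈ J, f i) = ∑ i ∈ J, dot y (f i) := by
  rw [dot_comm, dot_sum_left]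
  exact Finset.sum_congr rfl fun i _ => dot_comm _ _

lemma isLinearMap_dotR {n} (a : Vec n) : IsLinearMap ℝ (fun z : Vec n => dot a z) :=
  ⟨fun x y => dot_add_right a x y, fun r x => by rw [dot_smul_right]; rfl⟩

lemma convex_hs_le {n} (a : Vec n) (r : ℝ) : Convex ℝ {z : Vec n | dot a z ≤ r} :=
  convex_halfSpace_le (isLinearMap_dotR a) r

lemma convex_hs_ge {n} (a : Vec n) (r : ℝ) : Convex ℝ {z : Vec n | r ≤ dot a z} :=
  convex_halfSpace_ge (isLinearMap_dotR a) r

lemma hull_le {n} {A : Set (Vec n)} {a : Vec n} {r : ℝ} (h : ∀ s ∈ A, dot a s ≤ r) :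
    ∀ x ∈ convexHull ℝ A, dot a x ≤ r :=
  fun _ hx => convexHull_min h (convex_hs_le a r) hx

lemma hull_ge {n} {A : Set (Vec n)} {a : Vec n} {r : ℝ} (h : ∀ s ∈ A, r ≤ dot a s) :
    ∀ x ∈ convexHull ℝ A, r ≤ dot a x :=
  fun _ hx => convexHull_min h (convex_hs_ge a r) hx

end StmtAux
namespace StmtAux

section Cone
variable {E : Type*} [NormedAddCommGroup E] [NormedSpace ℝ E] {ι : Type*}

def coneIdx (g : ι → E) (J : Finset ι) : Set E :=
  {x | ∃ c : ι → ℝ, (∀ i ∈ J, 0 ≤ c i) ∧ x = ∑ i ∈ J, c i • g i}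

lemma coneIdx_mono (g : ι → E) {J K : Finset ι} (h : J ⊆ K) :
    coneIdx g J ⊆ coneIdx g K := by
  classical
  rintro x ⟨c, hc, rfl⟩
  refine ⟨fun i => if i ∈ J then c i else 0, ?_, ?_⟩
  · intro i _
    dsimp only
    split
    · exact hc _ ‹_›
    · exact le_rfl
  rw [← Finset.sum_subset h (fun i _ hiJ => by simp [hiJ])]
  exact Finset.sum_congr rfl fun i hi => by simp [hi]

lemma caratheodory (g : ι → E) :
    ∀ N (J : Finset ι), J.card ≤ N → ∀ x ∈ coneIdx g J,
      ∃ K, K ⊆ J ∧ LinearIndependent ℝ (fun k : ↑K => g ↑k) ∧ x ∈ coneIdx g K := by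
  classical
  intro N
  induction N with
  | zero =>
    intro J hJ x hx
    have hJe : J = ∅ := Finset.card_eq_zero.mp (Nat.le_zero.mp hJ)
    subst hJe
    refine ⟨∅, Finset.Subset.refl _, ?_, hx⟩
    have : IsEmpty ((∅ : Finset ι) : Set ι) := ⟨fun k => absurd k.2 (by simp)⟩
    exact linearIndependent_empty_type
  | succ N ih =>
    intro J hJ x hx
    by_cases hli : LinearIndependent ℝ (fun k : ↑J => g ↑k)
    · exact ⟨J, Finset.Subset.refl _, hli, hx⟩
    · obtain ⟨r, hr0, k0, hk0⟩ := Fintype.not_linearIndependent_iff.mp hli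
      set r' : ι → ℝ := fun i => if h : i ∈ J then r ⟨i, h⟩ else 0 with hr'
      have hsum0 : ∑ i ∈ J, r' i • g i = 0 := by
        rw [← Finset.sum_attach J (fun i => r' i • g i)]
        rw [← hr0, Finset.univ_eq_attach]
        refine Finset.sum_congr rfl fun k _ => ?_
        simp [hr', k.2]
      have hex : ∃ i ∈ J, r' i ≠ 0 := ⟨↑k0, k0.2, by simpa [hr', k0.2] using hk0⟩
      obtain ⟨s, hs_sum, i1, hi1J, hi1pos⟩ :
          ∃ s : ι → ℝ, (∑ i ∈ J, s i • g i = 0) ∧ ∃ i ∈ J, 0 < s i := by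
        obtain ⟨i0, hi0J, hi0⟩ := hex
        rcases lt_or_gt_of_ne hi0 with hneg | hpos
        · refine ⟨fun i => -(r' i), ?_, i0, hi0J, by simpa using neg_pos.mpr hneg⟩
          simp only [neg_smul, Finset.sum_neg_distrib, hsum0, neg_zero]
        · exact ⟨r', hsum0, i0, hi0J, hpos⟩
      obtain ⟨c, hc, hxeq⟩ := hx
      set Pos := J.filter (fun i => 0 < s i) with hPos
      have hPosne : Pos.Nonempty := ⟨i1, Finset.mem_filter.mpr ⟨hi1J, hi1pos⟩⟩
      obtain ⟨t0, ht0Pos, ht0min⟩ := Finset.exists_min_image Pos (fun i => c i / s i) hPosne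
      have ht0J : t0 ∈ J := (Finset.mem_filter.mp ht0Pos).1
      have ht0pos : 0 < s t0 := (Finset.mem_filter.mp ht0Pos).2
      set ρ := c t0 / s t0 with hρ
      have hρ0 : 0 ≤ ρ := div_nonneg (hc t0 ht0J) ht0pos.le
      set c' : ι → ℝ := fun i => c i - ρ * s i with hc'
      have hc'0 : ∀ i ∈ J, 0 ≤ c' i := by
        intro i hi
        by_cases hsi : 0 < s i
        · have hmin := ht0min i (Finset.mem_filter.mpr ⟨hi, hsi⟩)
          have : ρ * s i ≤ c i := by
            rw [hρ] at hmin ⊢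
            exact (le_div_iff₀ hsi).mp hmin
          simp only [hc']; linarith
        · push_neg at hsi
          have h1 : ρ * s i ≤ 0 := mul_nonpos_of_nonneg_of_nonpos hρ0 hsi
          have := hc i hi
          simp only [hc']; linarith
      have hxJ : x = ∑ i ∈ J, c' i • g i := by
        simp only [hc', sub_smul]
        rw [Finset.sum_sub_distrib]
        have : ∑ i ∈ J, (ρ * s i) • g i = ρ • ∑ i ∈ J, s i • g i := by
          rw [Finset.smul_sum]
          exact Finset.sum_congr rfl fun i _ => by rw [smul_smul]
        rw [this, hs_sum, smul_zero, sub_zero, hxeq]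
      have hct0 : c' t0 • g t0 = 0 := by
        have : c' t0 = 0 := by
          simp only [hc', hρ]
          field_simp
          ring
        rw [this, zero_smul]
      have hxe : x ∈ coneIdx g (J.erase t0) := by
        refine ⟨c', fun i hi => hc'0 i (Finset.mem_of_mem_erase hi), ?_⟩
        rw [hxJ]
        exact (Finset.sum_erase (f := fun i => c' i • g i) J hct0).symm
      have hcard : (J.erase t0).card ≤ N := by
        have := Finset.card_erase_of_mem ht0J
        omega
      obtain ⟨K, hKsub, hKli, hxK⟩ := ih (J.erase t0) hcard x hxe
      exact ⟨K, hKsub.trans (Finset.erase_subset _ _), hKli, hxK⟩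

lemma isClosed_coneIdx_of_li (g : ι → E) (J : Finset ι)
    (h : LinearIndependent ℝ (fun k : ↑J => g ↑k)) : IsClosed (coneIdx g J) := by
  classical
  set φ : ({ x // x ∈ J } → ℝ) →ₗ[ℝ] E :=
    { toFun := fun c => ∑ k : ↑J, c k • g ↑k
      map_add' := fun c d => by
        simp [add_smul, Finset.sum_add_distrib]
      map_smul' := fun r c => by
        simp [Finset.smul_sum, smul_smul] } with hφ
  have hker : LinearMap.ker φ = ⊥ := by
    rw [LinearMap.ker_eq_bot']
    intro c hc
    exact funext (Fintype.linearIndependent_iff.mp h c hc)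
  have hce := LinearMap.isClosedEmbedding_of_injective hker
  have himg : coneIdx g J = φ '' {c : { x // x ∈ J } → ℝ | ∀ k, 0 ≤ c k} := by
    ext x
    constructor
    · rintro ⟨c, hc, rfl⟩
      refine ⟨fun k => c ↑k, fun k => hc ↑k k.2, ?_⟩
      show ∑ k : ↑J, c ↑k • g ↑k = ∑ i ∈ J, c i • g i
      rw [← Finset.sum_attach J (fun i => c i • g i), Finset.univ_eq_attach]
    · rintro ⟨c, hc, rfl⟩
      refine ⟨fun i => if h : i ∈ J then c ⟨i, h⟩ else 0,
        fun i hi => by simp only [dif_pos hi]; exact hc _, ?_⟩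
      show ∑ k : ↑J, c k • g ↑k = _
      rw [← Finset.sum_attach J, Finset.univ_eq_attach]
      exact Finset.sum_congr rfl fun k _ => by simp [k.2]
  rw [himg]
  refine hce.isClosedMap _ ?_
  have : {c : { x // x ∈ J } → ℝ | ∀ k, 0 ≤ c k} = ⋂ k, {c : { x // x ∈ J } → ℝ | 0 ≤ c k} := by
    ext c; simp [Set.mem_iInter]
  rw [this]
  exact isClosed_iInter fun k => isClosed_le continuous_const (continuous_apply k)

lemma isClosed_coneIdx (g : ι → E) (J : Finset ι) : IsClosed (coneIdx g J) := by
  classical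
  have heq : coneIdx g J = ⋃ K ∈ (J.powerset : Finset (Finset ι)),
      (if LinearIndependent ℝ (fun k : ↑K => g ↑k) then coneIdx g K else ∅) := by
    apply Set.Subset.antisymm
    · intro x hx
      obtain ⟨K, hKJ, hli, hxK⟩ := caratheodory g J.card J le_rfl x hx
      exact Set.mem_biUnion (Finset.mem_powerset.mpr hKJ) (by rw [if_pos hli]; exact hxK)
    · intro x hx
      simp only [Set.mem_iUnion] at hx
      obtain ⟨K, hK, hxK⟩ := hx
      by_cases hli : LinearIndependent ℝ (fun k : ↑K => g ↑k)
      · rw [if_pos hli] at hxK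
        exact coneIdx_mono g (Finset.mem_powerset.mp hK) hxK
      · rw [if_neg hli] at hxK
        exact absurd hxK (Set.notMem_empty x)
  rw [heq]
  refine Set.Finite.isClosed_biUnion (J.powerset.finite_toSet) fun K _ => ?_
  split
  · exact isClosed_coneIdx_of_li g K ‹_›
  · exact isClosed_empty

lemma convex_coneIdx (g : ι → E) (J : Finset ι) : Convex ℝ (coneIdx g J) := by
  rintro x ⟨c, hc, rfl⟩ y ⟨d, hd, rfl⟩ a b ha hb hab
  refine ⟨fun i => a * c i + b * d i,
    fun i hi => add_nonneg (mul_nonneg ha (hc i hi)) (mul_nonneg hb (hd i hi)), ?_⟩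
  rw [Finset.smul_sum, Finset.smul_sum, ← Finset.sum_add_distrib]
  exact Finset.sum_congr rfl fun i _ => by rw [add_smul, smul_smul, smul_smul]

lemma farkas [Fintype ι] (g : ι → E) (v : E)
    (hv : v ∉ coneIdx g Finset.univ) :
    ∃ f : E →L[ℝ] ℝ, (∀ i, f (g i) ≤ 0) ∧ 0 < f v := by
  classical
  obtain ⟨f, u, hfu, huv⟩ := geometric_hahn_banach_closed_point
    (convex_coneIdx g Finset.univ) (isClosed_coneIdx g Finset.univ) hv
  have h0 : (0 : E) ∈ coneIdx g Finset.univ :=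
    ⟨0, fun i _ => le_rfl, by simp⟩
  have hu0 : 0 < u := by simpa using hfu 0 h0
  refine ⟨f, fun i => ?_, hu0.trans huv⟩
  by_contra hpos
  push_neg at hpos
  have hmem : ((u + 1) / f (g i)) • g i ∈ coneIdx g Finset.univ := by
    refine ⟨fun j => if j = i then (u + 1) / f (g i) else 0, ?_, ?_⟩
    · intro j _
      dsimp only
      split
      · positivity
      · exact le_rfl
    · have hterm : ∀ j, (if j = i then (u + 1) / f (g i) else 0) • g j
          = (if j = i then ((u + 1) / f (g i)) • g i else 0) := by
        intro j
        split
        · subst ‹j = i›; rfl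
        · exact zero_smul ℝ _
      simp only [hterm, Finset.sum_ite_eq' Finset.univ i, Finset.mem_univ, if_true]
  have hlt := hfu _ hmem
  rw [map_smul, smul_eq_mul, div_mul_cancel₀ _ (ne_of_gt hpos)] at hlt
  linarith

end Cone
end StmtAux
namespace StmtAux

lemma snoc_eq_iff {n : ℕ} {u w : Vec n} {a b : ℝ} :
    (Fin.snoc u a : Vec (n+1)) = Fin.snoc w b ↔ u = w ∧ a = b := by
  constructor
  · intro h
    constructor
    · funext i
      have := congrFun h (Fin.castSucc i)
      simpa using this
    · have := congrFun h (Fin.last n)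
      simpa using this
  · rintro ⟨rfl, rfl⟩; rfl

lemma inFphi_iff {n : ℕ} (P : Set (Vec n)) (v : Vec n) (F G : Set (Vec n)) :
    InFphi P v F G ↔ ∀ x ∈ F, ∀ y ∈ G, ∀ x' ∈ P, ∀ y' ∈ P,
      x + y = x' + y' → dot (x - y) v ≤ dot (x' - y') v := by
  unfold InFphi Pphi
  constructor
  · intro h x hx y hy x' hx' y' hy' hsum
    by_contra hlt
    push_neg at hlt
    refine h ⟨x, hx, y, hy, dot (x - y) v - dot (x' - y') v, by linarith, ?_⟩
    refine ⟨x', hx', y', hy', ?_⟩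
    rw [snoc_eq_iff]
    constructor
    · rw [hsum]
    · ring
  · rintro h ⟨x, hx, y, hy, lam, hlam, x', hx', y', hy', heq⟩
    rw [snoc_eq_iff] at heq
    obtain ⟨h1, h2⟩ := heq
    have hsum : x + y = x' + y' :=
      smul_right_injective (Vec n) (by norm_num : (1/2 : ℝ) ≠ 0) h1
    have := h x hx y hy x' hx' y' hy' hsum
    linarith

lemma face_convex {n : ℕ} {P : Set (Vec n)} (hP : Convex ℝ P) (c : Vec n) :
    Convex ℝ {x ∈ P | ∀ y ∈ P, dot c y ≤ dot c x} := by
  rintro x ⟨hxP, hxm⟩ z ⟨hzP, hzm⟩ a b ha hb hab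
  refine ⟨hP hxP hzP ha hb hab, fun y hy => ?_⟩
  have h1 : dot c (a • x + b • z) = a * dot c x + b * dot c z := by
    rw [dot_add_right, dot_smul_right, dot_smul_right]
  have h2 : dot c y ≤ dot c x := hxm y hy
  have h3 : dot c y ≤ dot c z := hzm y hy
  have h4 : a * dot c y + b * dot c y = dot c y := by rw [← add_mul, hab, one_mul]
  have h5 := mul_le_mul_of_nonneg_left h2 ha
  have h6 := mul_le_mul_of_nonneg_left h3 hb
  linarith

lemma face_sub_hull {n : ℕ} (S : Finset (Vec n)) (c : Vec n) (F : Set (Vec n))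
    (hFdef : F = {x ∈ convexHull ℝ ↑S | ∀ y ∈ convexHull ℝ ↑S, dot c y ≤ dot c x}) :
    F ⊆ convexHull ℝ (↑S ∩ F) := by
  classical
  intro x hxF
  have hx := hFdef ▸ hxF
  obtain ⟨hxP, hxm⟩ := hx
  rw [Finset.convexHull_eq] at hxP
  obtain ⟨w, hw0, hw1, hwx⟩ := hxP
  rw [Finset.centerMass_eq_of_sum_1 _ _ hw1] at hwx
  simp only [id_eq] at hwx
  -- every point of S with positive weight lies in F
  have hkey : ∀ s ∈ S, w s ≠ 0 → s ∈ F := by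
    intro s hs hws
    by_contra hsF
    have hwspos : 0 < w s := lt_of_le_of_ne (hw0 s hs) (Ne.symm hws)
    have hsP : s ∈ convexHull ℝ (↑S : Set (Vec n)) :=
      subset_convexHull ℝ _ (Finset.mem_coe.mpr hs)
    have hslt : dot c s < dot c x := by
      rw [hFdef] at hsF
      simp only [Set.mem_setOf_eq, not_and, not_forall] at hsF
      obtain ⟨y, hyP, hy⟩ := hsF hsP
      push_neg at hy
      exact lt_of_lt_of_le hy (hxm y hyP)
    have hstrict : ∑ s ∈ S, w s * dot c s < ∑ s ∈ S, w s * dot c x := by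
      refine Finset.sum_lt_sum (fun i hi => ?_) ⟨s, hs, ?_⟩
      · exact mul_le_mul_of_nonneg_left (hxm i (subset_convexHull ℝ _ (Finset.mem_coe.mpr hi)))
          (hw0 i hi)
      · exact mul_lt_mul_of_pos_left hslt hwspos
    have hxdot : dot c x = ∑ s ∈ S, w s * dot c s := by
      conv_lhs => rw [← hwx]
      rw [dot_sum_right]
      exact Finset.sum_congr rfl fun i _ => dot_smul_right _ _ _
    rw [← hxdot, ← Finset.sum_mul, hw1, one_mul] at hstrict
    exact lt_irrefl _ hstrict
  -- restrict the combination to the positive-weight points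
  have hxcm : x = S.centerMass w id := by
    rw [Finset.centerMass_eq_of_sum_1 _ _ hw1]
    simpa using hwx.symm
  rw [hxcm, ← Finset.centerMass_filter_ne_zero (z := id)]
  refine Finset.centerMass_mem_convexHull _ (fun i hi => hw0 i (Finset.mem_filter.mp hi).1)
    ?_ (fun i hi => ?_)
  · have : ∑ i ∈ {i ∈ S | w i ≠ 0}, w i = 1 := by
      rw [Finset.sum_filter_ne_zero, hw1]
    rw [this]; norm_num
  · obtain ⟨hiS, hiw⟩ := Finset.mem_filter.mp hi
    exact ⟨Finset.mem_coe.mpr hiS, hkey i hiS hiw⟩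

lemma centroid_mem_hull {n : ℕ} (SF : Finset (Vec n)) (h : SF.Nonempty) :
    (SF.card : ℝ)⁻¹ • ∑ t ∈ SF, t ∈ convexHull ℝ (↑SF : Set (Vec n)) := by
  have hc := Finset.centerMass_mem_convexHull SF (w := fun _ => (1:ℝ))
    (fun i _ => zero_le_one) (by
      rw [Finset.sum_const]
      simpa using h.card_pos) (fun i hi => Finset.mem_coe.mpr hi) (z := id)
  simpa [Finset.centerMass, Finset.sum_const, nsmul_eq_mul] using hc

lemma promote {n : ℕ} (P F : Set (Vec n)) (SF : Finset (Vec n)) (hne : SF.Nonempty)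
    (hSP : (↑SF : Set (Vec n)) ⊆ P) (hFP : F ⊆ P)
    (hFh : F ⊆ convexHull ℝ (↑SF : Set (Vec n))) (a : Vec n)
    (ha : ∀ y ∈ P, dot a y ≤ dot a ((SF.card : ℝ)⁻¹ • ∑ t ∈ SF, t)) :
    a ∈ normalCone P F := by
  set x₀ : Vec n := (SF.card : ℝ)⁻¹ • ∑ t ∈ SF, t with hx₀
  have hcard : (0:ℝ) < SF.card := by exact_mod_cast hne.card_pos
  have hsum : ∑ t ∈ SF, dot a t = SF.card * dot a x₀ := by
    rw [hx₀, dot_smul_right, dot_sum_right]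
    field_simp
  have hstep1 : ∀ t ∈ SF, dot a t = dot a x₀ := by
    intro t ht
    by_contra hne'
    have hlt : dot a t < dot a x₀ :=
      lt_of_le_of_ne (ha t (hSP (Finset.mem_coe.mpr ht))) hne'
    have hstrict : ∑ t ∈ SF, dot a t < ∑ _t ∈ SF, dot a x₀ :=
      Finset.sum_lt_sum (fun i hi => ha i (hSP (Finset.mem_coe.mpr hi))) ⟨t, ht, hlt⟩
    rw [Finset.sum_const, nsmul_eq_mul, hsum] at hstrict
    exact lt_irrefl _ hstrict
  have hstep2 : ∀ x ∈ F, dot a x = dot a x₀ := by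
    intro x hx
    have hxh := hFh hx
    have h1 : dot a x ≤ dot a x₀ :=
      hull_le (fun s hs => le_of_eq (hstep1 s (Finset.mem_coe.mp hs))) x hxh
    have h2 : dot a x₀ ≤ dot a x :=
      hull_ge (fun s hs => ge_of_eq (hstep1 s (Finset.mem_coe.mp hs))) x hxh
    linarith
  intro x hx
  exact ⟨hFP hx, fun y hy => (ha y hy).trans_eq (hstep2 x hx).symm⟩

end StmtAux
namespace StmtAux

lemma dot_zero_left {n : ℕ} (y : Vec n) : dot 0 y = 0 := map_zero (dotL y)

lemma dot_neg_right {n : ℕ} (x y : Vec n) : dot x (-y) = - dot x y := by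
  rw [dot_comm, dot_neg_left, dot_comm]

lemma single_smul_one {n : ℕ} (w : Vec n) (i : Fin n) :
    (w i) • (Pi.single i (1:ℝ) : Vec n) = Pi.single i (w i) := by
  funext j
  simp [Pi.single_apply]

lemma sum_single_eq {n : ℕ} (w : Vec n) :
    ∑ i, (w i) • (Pi.single i (1:ℝ) : Vec n) = w := by
  simp only [single_smul_one]
  exact Finset.univ_sum_single w

lemma clm_decomp {n : ℕ} (f : (Vec n × ℝ) →L[ℝ] ℝ) (w : Vec n) (r : ℝ) :
    f (w, r) = dot w (fun i => f (Pi.single i 1, 0)) + r * f ((0 : Vec n), (1:ℝ)) := by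
  have hw : ((w, r) : Vec n × ℝ)
      = (∑ i, (w i) • (((Pi.single i 1 : Vec n), (0:ℝ)) : Vec n × ℝ))
        + r • (((0 : Vec n), (1:ℝ)) : Vec n × ℝ) := by
    have h1 : (∑ i, (w i) • (((Pi.single i 1 : Vec n), (0:ℝ)) : Vec n × ℝ)).1 = w := by
      rw [Prod.fst_sum]
      simpa using sum_single_eq w
    have h2 : (∑ i, (w i) • (((Pi.single i 1 : Vec n), (0:ℝ)) : Vec n × ℝ)).2 = 0 := by
      rw [Prod.snd_sum]
      simp
    have h3 : (r • (((0 : Vec n), (1:ℝ)) : Vec n × ℝ)).1 = 0 := by simp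
    have h4 : (r • (((0 : Vec n), (1:ℝ)) : Vec n × ℝ)).2 = r := by simp
    rw [Prod.ext_iff, Prod.fst_add, Prod.snd_add, h1, h2, h3, h4]
    constructor <;> simp
  rw [hw, map_add, map_sum, map_smul, smul_eq_mul]
  have h3 : ∑ i, f ((w i) • (((Pi.single i 1 : Vec n), (0:ℝ)) : Vec n × ℝ))
      = ∑ i, w i * f ((Pi.single i 1 : Vec n), (0:ℝ)) := by
    refine Finset.sum_congr rfl fun i _ => ?_
    rw [map_smul, smul_eq_mul]
  rw [h3]
  rfl

end StmtAux
open StmtAux in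
/-- For a polytope `P ⊆ ℝⁿ`, a vector `v ∈ ℝⁿ` and nonempty faces `F, G` of `P`,
`(F, G) ∈ F^φ` if and only if `v ∈ cone(-N_P(F) ∪ N_P(G))`. -/
theorem stmt1 {n : ℕ} (P : Set (Vec n)) (v : Vec n) (F G : Set (Vec n))
    (hP : IsPolytope P) (hF : IsFace P F) (hG : IsFace P G)
    (hFne : F.Nonempty) (hGne : G.Nonempty) :
    InFphi P v F G ↔ v ∈ coneOf ((Neg.neg '' normalCone P F) ∪ normalCone P G) := by
  classical
  obtain ⟨S, hPS⟩ := hP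
  obtain ⟨cF, hFdef⟩ := hF
  obtain ⟨cG, hGdef⟩ := hG
  have hPconv : Convex ℝ P := hPS ▸ convex_convexHull ℝ _
  have hFP : F ⊆ P := by rw [hFdef]; exact Set.sep_subset _ _
  have hGP : G ⊆ P := by rw [hGdef]; exact Set.sep_subset _ _
  rw [inFphi_iff]
  constructor
  · -- hard direction
    intro hIn
    have hFhull : F ⊆ convexHull ℝ (↑S ∩ F) :=
      face_sub_hull S cF F (by rw [hFdef, hPS])
    have hGhull : G ⊆ convexHull ℝ (↑S ∩ G) :=
      face_sub_hull S cG G (by rw [hGdef, hPS])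
    set SF : Finset (Vec n) := S.filter (fun s => s ∈ F) with hSFdef
    set SG : Finset (Vec n) := S.filter (fun s => s ∈ G) with hSGdef
    have hSFcoe : (↑SF : Set (Vec n)) = ↑S ∩ F := by
      ext s; simp [hSFdef, Finset.mem_filter]
    have hSGcoe : (↑SG : Set (Vec n)) = ↑S ∩ G := by
      ext s; simp [hSGdef, Finset.mem_filter]
    have hSFne : SF.Nonempty := by
      rw [Finset.nonempty_iff_ne_empty]
      intro hemp
      obtain ⟨x, hx⟩ := hFne
      have hxh := hFhull hx
      rw [← hSFcoe, hemp] at hxh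
      simp at hxh
    have hSGne : SG.Nonempty := by
      rw [Finset.nonempty_iff_ne_empty]
      intro hemp
      obtain ⟨x, hx⟩ := hGne
      have hxh := hGhull hx
      rw [← hSGcoe, hemp] at hxh
      simp at hxh
    set x₀ : Vec n := (SF.card : ℝ)⁻¹ • ∑ t ∈ SF, t with hx₀def
    set y₀ : Vec n := (SG.card : ℝ)⁻¹ • ∑ t ∈ SG, t with hy₀def
    have hx₀F : x₀ ∈ F := by
      refine convexHull_min ?_ ?_ (centroid_mem_hull SF hSFne)
      · rw [hSFcoe]; exact Set.inter_subset_right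
      · rw [hFdef]; exact face_convex hPconv cF
    have hy₀G : y₀ ∈ G := by
      refine convexHull_min ?_ ?_ (centroid_mem_hull SG hSGne)
      · rw [hSGcoe]; exact Set.inter_subset_right
      · rw [hGdef]; exact face_convex hPconv cG
    have hx₀P : x₀ ∈ P := hFP hx₀F
    have hy₀P : y₀ ∈ P := hGP hy₀G
    set g : ({ x // x ∈ S } ⊕ { x // x ∈ S }) → (Vec n × ℝ) :=
      Sum.elim (fun s => (((s : Vec n) - x₀ : Vec n), (0:ℝ)))
               (fun s => (((s : Vec n) - y₀ : Vec n), - dot ((s : Vec n) - y₀) v)) with hgdef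
    by_cases hz : (((0 : Vec n), (-1 : ℝ)) : Vec n × ℝ) ∈ coneIdx g Finset.univ
    · -- impossible: contradicts hIn
      exfalso
      obtain ⟨c, hc0, hzeq⟩ := hz
      set lam : { x // x ∈ S } → ℝ := fun s => c (Sum.inl s) with hlam
      set mu : { x // x ∈ S } → ℝ := fun s => c (Sum.inr s) with hmu
      set p : Vec n := ∑ s, lam s • ((s : Vec n) - x₀) with hpdef
      set q : Vec n := ∑ s, mu s • ((s : Vec n) - y₀) with hqdef
      rw [Fintype.sum_sum_type] at hzeq
      have h1 : (0 : Vec n) = p + q := by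
        have := congrArg Prod.fst hzeq
        simpa [hgdef, Prod.fst_sum, hpdef, hqdef, hlam, hmu] using this
      have h2 : (-1 : ℝ) = ∑ s, mu s * (- dot ((s : Vec n) - y₀) v) := by
        have := congrArg Prod.snd hzeq
        simpa [hgdef, Prod.snd_sum, hmu] using this
      have hqv : dot q v = 1 := by
        rw [hqdef, dot_sum_left]
        have hc : ∀ s ∈ Finset.univ, dot (mu s • ((s : Vec n) - y₀)) v
            = -(mu s * (- dot ((s : Vec n) - y₀) v)) := by
          intro s _
          rw [dot_smul_left]; ring
        rw [Finset.sum_congr rfl hc, Finset.sum_neg_distrib, ← h2]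
        norm_num
      have hpv : dot p v = -1 := by
        have hpq : p = -q := eq_neg_of_add_eq_zero_left h1.symm
        rw [hpq, dot_neg_left, hqv]
      set Sl := ∑ s, lam s with hSl
      set Sm := ∑ s, mu s with hSm
      have hlam0 : ∀ s, 0 ≤ lam s := fun s => hc0 _ (Finset.mem_univ _)
      have hmu0 : ∀ s, 0 ≤ mu s := fun s => hc0 _ (Finset.mem_univ _)
      have hSl0 : 0 ≤ Sl := Finset.sum_nonneg fun s _ => hlam0 s
      have hSm0 : 0 ≤ Sm := Finset.sum_nonneg fun s _ => hmu0 s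
      have hSlpos : 0 < Sl := by
        rcases hSl0.lt_or_eq with h | h
        · exact h
        · exfalso
          have hall := (Finset.sum_eq_zero_iff_of_nonneg (fun s _ => hlam0 s)).mp h.symm
          have hp0 : p = 0 := by
            rw [hpdef]
            refine Finset.sum_eq_zero fun s _ => ?_
            rw [hall s (Finset.mem_univ s), zero_smul]
          rw [hp0, dot_zero_left] at hpv
          norm_num at hpv
      have hSmpos : 0 < Sm := by
        rcases hSm0.lt_or_eq with h | h
        · exact h
        · exfalso
          have hall := (Finset.sum_eq_zero_iff_of_nonneg (fun s _ => hmu0 s)).mp h.symm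
          have hq0 : q = 0 := by
            rw [hqdef]
            refine Finset.sum_eq_zero fun s _ => ?_
            rw [hall s (Finset.mem_univ s), zero_smul]
          rw [hq0, dot_zero_left] at hqv
          norm_num at hqv
      set eps := min Sl⁻¹ Sm⁻¹ with heps
      have hepspos : 0 < eps := lt_min (inv_pos.mpr hSlpos) (inv_pos.mpr hSmpos)
      have hepsSl : eps * Sl ≤ 1 := by
        have h := min_le_left Sl⁻¹ Sm⁻¹
        calc eps * Sl ≤ Sl⁻¹ * Sl := mul_le_mul_of_nonneg_right h hSl0
        _ = 1 := inv_mul_cancel₀ hSlpos.ne'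
      have hepsSm : eps * Sm ≤ 1 := by
        have h := min_le_right Sl⁻¹ Sm⁻¹
        calc eps * Sm ≤ Sm⁻¹ * Sm := mul_le_mul_of_nonneg_right h hSm0
        _ = 1 := inv_mul_cancel₀ hSmpos.ne'
      have hmemP : ∀ (z₀ : Vec n) (w : {x // x ∈ S} → ℝ), (∀ s, 0 ≤ w s) →
          0 < ∑ s, w s → eps * (∑ s, w s) ≤ 1 → z₀ ∈ P →
          z₀ + eps • (∑ s, w s • ((s : Vec n) - z₀)) ∈ P := by
        intro z₀ w hw hSw hes hz₀
        set m : Vec n := (∑ s, w s)⁻¹ • ∑ s, w s • (s : Vec n) with hm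
        have hmP : m ∈ P := by
          rw [hPS]
          have hcm := Finset.centerMass_mem_convexHull (Finset.univ : Finset {x // x ∈ S})
            (w := w) (fun i _ => hw i) (by simpa using hSw)
            (fun i _ => Finset.mem_coe.mpr i.2) (z := fun s => (s : Vec n))
          simpa [Finset.centerMass, hm] using hcm
        have hexp : ∑ s, w s • ((s : Vec n) - z₀)
            = (∑ s, w s • (s : Vec n)) - (∑ s, w s) • z₀ := by
          have hterm : ∀ s ∈ (Finset.univ : Finset {x // x ∈ S}),
              w s • ((s : Vec n) - z₀) = w s • (s : Vec n) - w s • z₀ :=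
            fun s _ => smul_sub _ _ _
          rw [Finset.sum_congr rfl hterm, Finset.sum_sub_distrib, ← Finset.sum_smul]
        have hre : z₀ + eps • (∑ s, w s • ((s : Vec n) - z₀))
            = (1 - eps * (∑ s, w s)) • z₀ + (eps * (∑ s, w s)) • m := by
          have hcanc : (eps * (∑ s, w s)) • m = eps • ∑ s, w s • (s : Vec n) := by
            rw [hm, smul_smul, mul_assoc, mul_inv_cancel₀ hSw.ne', mul_one]
          rw [hcanc, hexp, smul_sub, sub_smul, one_smul, smul_smul]
          abel
        rw [hre]
        exact hPconv hz₀ hmP (by linarith) (by positivity) (by ring)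
      have hx'P : x₀ + eps • p ∈ P := hmemP x₀ lam hlam0 hSlpos hepsSl hx₀P
      have hy'P : y₀ + eps • q ∈ P := hmemP y₀ mu hmu0 hSmpos hepsSm hy₀P
      have hsum : x₀ + y₀ = (x₀ + eps • p) + (y₀ + eps • q) := by
        have h0 : eps • p + eps • q = 0 := by
          rw [← smul_add, ← h1, smul_zero]
        rw [show (x₀ + eps • p) + (y₀ + eps • q) = (x₀ + y₀) + (eps • p + eps • q) from by abel,
          h0, add_zero]
      have hle := hIn x₀ hx₀F y₀ hy₀G _ hx'P _ hy'P hsum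
      have hdiff : (x₀ + eps • p) - (y₀ + eps • q) = (x₀ - y₀) + (eps • p - eps • q) := by abel
      rw [hdiff, dot_add_left] at hle
      have he1 : dot (eps • p - eps • q) v = eps * dot p v - eps * dot q v := by
        rw [dot_sub_left, dot_smul_left, dot_smul_left]
      rw [he1, hpv, hqv] at hle
      linarith
    · -- Farkas gives the normal vectors
      obtain ⟨f, hfle, hfv⟩ := farkas g _ hz
      set δ := f (((0 : Vec n), (1:ℝ)) : Vec n × ℝ) with hδdef
      have hδneg : δ < 0 := by
        have hh : (((0 : Vec n), (-1 : ℝ)) : Vec n × ℝ)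
            = (-1 : ℝ) • (((0 : Vec n), (1:ℝ)) : Vec n × ℝ) := by
          rw [Prod.ext_iff]; constructor <;> simp
        rw [hh, map_smul, smul_eq_mul] at hfv
        rw [hδdef]; nlinarith
      set d : Vec n := fun i => f ((Pi.single i 1 : Vec n), (0:ℝ)) with hddef
      have hfdot : ∀ (w : Vec n) (r : ℝ), f ((w, r) : Vec n × ℝ) = dot w d + r * δ := by
        intro w r
        rw [clm_decomp f w r, hddef, hδdef]
      have hδpos : 0 < -δ := by linarith
      have hfl : ∀ s : {x // x ∈ S}, dot ((s : Vec n) - x₀) d ≤ 0 := by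
        intro s
        have hh := hfle (Sum.inl s)
        rw [show g (Sum.inl s) = ((((s : Vec n) - x₀ : Vec n), (0:ℝ)) : Vec n × ℝ) from rfl,
          hfdot] at hh
        simpa using hh
      have hfr : ∀ s : {x // x ∈ S},
          dot ((s : Vec n) - y₀) d ≤ dot ((s : Vec n) - y₀) v * δ := by
        intro s
        have hh := hfle (Sum.inr s)
        rw [show g (Sum.inr s)
            = ((((s : Vec n) - y₀ : Vec n), - dot ((s : Vec n) - y₀) v) : Vec n × ℝ) from rfl,
          hfdot] at hh
        nlinarith [hh]
      set a : Vec n := (-δ)⁻¹ • d with hadef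
      set b : Vec n := v + a with hbdef
      have haS : ∀ s ∈ (↑S : Set (Vec n)), dot a s ≤ dot a x₀ := by
        intro s hs
        have hsS : s ∈ S := Finset.mem_coe.mp hs
        have h2 : dot (s - x₀) a ≤ 0 := by
          rw [hadef, dot_smul_right]
          exact mul_nonpos_of_nonneg_of_nonpos (inv_nonneg.mpr hδpos.le) (hfl ⟨s, hsS⟩)
        rw [dot_sub_left] at h2
        rw [dot_comm a s, dot_comm a x₀]
        linarith
      have haP : ∀ y ∈ P, dot a y ≤ dot a x₀ := by
        intro y hy
        rw [hPS] at hy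
        exact hull_le haS y hy
      have hbS : ∀ s ∈ (↑S : Set (Vec n)), dot b s ≤ dot b y₀ := by
        intro s hs
        have hsS : s ∈ S := Finset.mem_coe.mp hs
        have hδne : δ ≠ 0 := hδneg.ne
        have h2 : dot (s - y₀) b ≤ 0 := by
          rw [hbdef, dot_add_right, hadef, dot_smul_right]
          have h3 := hfr ⟨s, hsS⟩
          have h4 : (-δ)⁻¹ * dot (s - y₀) d ≤ (-δ)⁻¹ * (dot (s - y₀) v * δ) :=
            mul_le_mul_of_nonneg_left h3 (inv_nonneg.mpr hδpos.le)
          have h5 : (-δ)⁻¹ * (dot (s - y₀) v * δ) = - dot (s - y₀) v := by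
            rw [inv_neg]
            field_simp
          linarith
        rw [dot_sub_left] at h2
        rw [dot_comm b s, dot_comm b y₀]
        linarith
      have hbP : ∀ y ∈ P, dot b y ≤ dot b y₀ := by
        intro y hy
        rw [hPS] at hy
        exact hull_le hbS y hy
      have haN : a ∈ normalCone P F := by
        refine promote P F SF hSFne ?_ hFP ?_ a haP
        · rw [hSFcoe]
          exact fun s hs => hFP hs.2
        · rw [hSFcoe]
          exact hFhull
      have hbN : b ∈ normalCone P G := by
        refine promote P G SG hSGne ?_ hGP ?_ b hbP
        · rw [hSGcoe]
          exact fun s hs => hGP hs.2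
        · rw [hSGcoe]
          exact hGhull
      refine ⟨2, ![-a, b], ![1, 1], ?_, ?_, ?_⟩
      · intro i
        fin_cases i
        · simp only [Matrix.cons_val_zero]
          exact Or.inl ⟨a, haN, rfl⟩
        · simp only [Matrix.cons_val_one, Matrix.head_cons]
          exact Or.inr hbN
      · intro i
        fin_cases i <;> norm_num
      · rw [Fin.sum_univ_two]
        simp only [Matrix.cons_val_zero, Matrix.cons_val_one, Matrix.head_cons, one_smul]
        rw [hbdef]
        abel
  · -- easy direction
    rintro ⟨k, xs, ls, hxs, hls, hveq⟩ x hx y hy x' hx' y' hy' hsum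
    have hd : x - x' = y' - y := by
      rw [sub_eq_sub_iff_add_eq_add]
      exact hsum.trans (add_comm x' y')
    have hterm : ∀ i, dot (x - x') (xs i) ≤ 0 := by
      intro i
      rcases hxs i with ⟨aa, haa, hval⟩ | hb
      · rw [← hval]
        have h1 := (haa hx).2 x' hx'
        rw [show Neg.neg aa = -aa from rfl, dot_neg_right, dot_sub_left,
          dot_comm x aa, dot_comm x' aa]
        linarith
      · have h1 := (hb hy).2 y' hy'
        rw [hd, dot_sub_left, dot_comm y' (xs i), dot_comm y (xs i)]
        linarith
    have hxx' : dot (x - x') v ≤ 0 := by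
      rw [hveq, dot_sum_right]
      refine Finset.sum_nonpos fun i _ => ?_
      rw [dot_smul_right]
      exact mul_nonpos_of_nonneg_of_nonpos (hls i) (hterm i)
    have h5 : dot (x - x') v = dot (y' - y) v := by rw [hd]
    rw [dot_sub_left] at hxx'
    rw [dot_sub_left, dot_sub_left] at h5
    rw [dot_sub_left, dot_sub_left]
    linarith
end
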